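/- Let T > 0, n ∈ ℕ, p ∈ [1,∞), σ > 0, and let D ⊆ L^p((0,T);ℝⁿ) satisfy conditions (D1) and (D2) (every u ∈ D has a representative with values in {0,1}ⁿ and componentwise pointwise total variations summing to at most σ, and D is closed in L^p). For each k ∈ ℕ let I₁^k,…,I_{N_k}^k be pairwise disjoint open intervals in (0,T) whose closures cover [0,T] and which are nested in the sense that every interval I_r^{k+1} is contained in some interval I_i^k. Define Π_k : L^p((0,T);ℝⁿ) → ℝ^{n·N_k} by (Π_k u)_{(j-1)N_k + i} = (1/λ(I_i^k)) ∫_{I_i^k} u_j dλ for j = 1,…,n and i = 1,…,N_k, set C_{D,Π_k} := conv{Π_k(u) : u ∈ D}, and V_k := {v ∈ L^p((0,T);ℝⁿ) : Π_k(v) ∈ C_{D,Π_k}}. Then V_{k+1} ⊆ V_k for all k ∈ ℕ. -/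

import Mathlib

open MeasureTheory Set Filter
open scoped ENNReal

/-- The local averaging projection associated with a family of intervals
`(a i, b i)`, `i = 1,…,N`, sending `u` to the vector of averages of the
components `u_j` over the intervals. -/
noncomputable def proj (T : ℝ) (n : ℕ) (p : ℝ≥0∞) (N : ℕ) (a b : Fin N → ℝ)
    (u : Lp (Fin n → ℝ) p (volume.restrict (Ioo (0:ℝ) T))) :
    Fin n × Fin N → ℝ :=
  fun q => (b q.2 - a q.2)⁻¹ *
    ∫ t in Ioo (a q.2) (b q.2), (u : ℝ → Fin n → ℝ) t q.1
      ∂(volume.restrict (Ioo (0:ℝ) T))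

private lemma integral_split {T : ℝ} {M Nf : ℕ} {A B : Fin M → ℝ} {a b : Fin Nf → ℝ}
    (hdisjM : ∀ i i' : Fin M, i ≠ i' → Disjoint (Ioo (A i) (B i)) (Ioo (A i') (B i')))
    (hdisjf : ∀ r r' : Fin Nf, r ≠ r' → Disjoint (Ioo (a r) (b r)) (Ioo (a r') (b r')))
    (f : Fin Nf → Fin M) (hf : ∀ r, Ioo (a r) (b r) ⊆ Ioo (A (f r)) (B (f r)))
    (i : Fin M)
    (hcov : Ioo (A i) (B i) ⊆ ⋃ r : Fin Nf, Icc (a r) (b r))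
    (g : ℝ → ℝ) (hg : Integrable g (volume.restrict (Ioo (0:ℝ) T))) :
    ∫ t in Ioo (A i) (B i), g t ∂(volume.restrict (Ioo (0:ℝ) T)) =
      ∑ r ∈ Finset.univ.filter (fun r => f r = i),
        ∫ t in Ioo (a r) (b r), g t ∂(volume.restrict (Ioo (0:ℝ) T)) := by
  classical
  set S := Finset.univ.filter (fun r => f r = i) with hS
  have hUsub : (⋃ r ∈ S, Ioo (a r) (b r)) ⊆ Ioo (A i) (B i) := by
    intro t ht
    simp only [mem_iUnion, exists_prop] at ht
    obtain ⟨r, hr, htr⟩ := ht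
    have hri : f r = i := (Finset.mem_filter.1 hr).2
    exact hri ▸ hf r htr
  have hE : (volume.restrict (Ioo (0:ℝ) T)) (⋃ r : Fin Nf, ({a r, b r} : Set ℝ)) = 0 := by
    have h0 : volume (⋃ r : Fin Nf, ({a r, b r} : Set ℝ)) = 0 :=
      measure_iUnion_null fun r => (Set.toFinite _).measure_zero _
    exact le_antisymm (le_trans (Measure.restrict_le_self _) h0.le) zero_le
  have hdiff : Ioo (A i) (B i) \ (⋃ r ∈ S, Ioo (a r) (b r)) ⊆
      ⋃ r : Fin Nf, ({a r, b r} : Set ℝ) := by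
    rintro t ⟨ht, htU⟩
    obtain ⟨r, hts⟩ := mem_iUnion.1 (hcov ht)
    rcases eq_or_lt_of_le hts.1 with h1 | h1
    · exact mem_iUnion.2 ⟨r, Or.inl h1.symm⟩
    rcases eq_or_lt_of_le hts.2 with h2 | h2
    · exact mem_iUnion.2 ⟨r, Or.inr (by simp [h2])⟩
    have htio : t ∈ Ioo (a r) (b r) := ⟨h1, h2⟩
    have hfr : f r = i := by
      by_contra hne
      exact Set.disjoint_left.1 (hdisjM _ _ hne) (hf r htio) ht
    have : t ∈ ⋃ r ∈ S, Ioo (a r) (b r) := by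
      simp only [mem_iUnion, exists_prop]
      exact ⟨r, Finset.mem_filter.2 ⟨Finset.mem_univ r, hfr⟩, htio⟩
    exact absurd this htU
  have hae : Ioo (A i) (B i) =ᵐ[volume.restrict (Ioo (0:ℝ) T)]
      (⋃ r ∈ S, Ioo (a r) (b r)) := by
    rw [ae_eq_set]
    constructor
    · exact measure_mono_null hdiff hE
    · rw [diff_eq_empty.2 hUsub]; exact measure_empty
  rw [setIntegral_congr_set hae]
  exact integral_biUnion_finset S (fun r _ => measurableSet_Ioo)
    (fun r _ r' _ hne => hdisjf r r' hne) (fun r _ => hg.integrableOn)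

/-- monotonicity part of Theorem 3.4: for nested families of
disjoint open intervals whose closures cover `[0,T]`, the relaxations
`V_k = {v : Π_k(v) ∈ C_{D,Π_k}}` are nested: `V_{k+1} ⊆ V_k`. -/
theorem stmt_6
    (T : ℝ) (hT : 0 < T) (n : ℕ) (p : ℝ≥0∞) [Fact (1 ≤ p)] (hp : p ≠ ⊤)
    (σ : ℝ) (hσ : 0 < σ)
    (D : Set (Lp (Fin n → ℝ) p (volume.restrict (Ioo (0:ℝ) T))))
    (hD1 : ∀ u ∈ D, ∃ v : ℝ → Fin n → ℝ,
      ((u : ℝ → Fin n → ℝ) =ᵐ[volume.restrict (Ioo (0:ℝ) T)] v) ∧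
      (∀ t ∈ Ioo (0:ℝ) T, ∀ j, v t j = 0 ∨ v t j = 1) ∧
      (∑ j : Fin n, eVariationOn (fun s => v s j) (Ioo (0:ℝ) T)) ≤ ENNReal.ofReal σ)
    (hD2 : IsClosed D)
    (N : ℕ → ℕ) (a b : (k : ℕ) → Fin (N k) → ℝ)
    (hab : ∀ k i, a k i < b k i)
    (hsub : ∀ k i, Ioo (a k i) (b k i) ⊆ Ioo (0:ℝ) T)
    (hdisj : ∀ k, ∀ i i' : Fin (N k), i ≠ i' →
      Disjoint (Ioo (a k i) (b k i)) (Ioo (a k i') (b k i')))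
    (hcover : ∀ k, (⋃ i : Fin (N k), Icc (a k i) (b k i)) = Icc (0:ℝ) T)
    (hnested : ∀ k, ∀ r : Fin (N (k+1)), ∃ i : Fin (N k),
      Ioo (a (k+1) r) (b (k+1) r) ⊆ Ioo (a k i) (b k i)) :
    ∀ k : ℕ,
      {v : Lp (Fin n → ℝ) p (volume.restrict (Ioo (0:ℝ) T)) |
          proj T n p (N (k+1)) (a (k+1)) (b (k+1)) v ∈
            convexHull ℝ (proj T n p (N (k+1)) (a (k+1)) (b (k+1)) '' D)} ⊆
      {v : Lp (Fin n → ℝ) p (volume.restrict (Ioo (0:ℝ) T)) |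
          proj T n p (N k) (a k) (b k) v ∈
            convexHull ℝ (proj T n p (N k) (a k) (b k) '' D)} := by
  classical
  intro k v hv
  haveI : IsFiniteMeasure (volume.restrict (Ioo (0:ℝ) T)) := by
    constructor
    rw [Measure.restrict_apply_univ, Real.volume_Ioo]
    exact ENNReal.ofReal_lt_top
  have hf : ∀ r, Ioo (a (k+1) r) (b (k+1) r) ⊆
      Ioo (a k ((hnested k r).choose)) (b k ((hnested k r).choose)) :=
    fun r => (hnested k r).choose_spec
  set f : Fin (N (k+1)) → Fin (N k) := fun r => (hnested k r).choose with hfdef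
  set L : (Fin n × Fin (N (k+1)) → ℝ) →ₗ[ℝ] (Fin n × Fin (N k) → ℝ) :=
    { toFun := fun x q => ∑ r ∈ Finset.univ.filter (fun r => f r = q.2),
        ((b (k+1) r - a (k+1) r) / (b k q.2 - a k q.2)) * x (q.1, r)
      map_add' := by
        intro x y; funext q
        simp [mul_add, Finset.sum_add_distrib]
      map_smul' := by
        intro c x; funext q
        simp only [Pi.smul_apply, smul_eq_mul, RingHom.id_apply]
        rw [Finset.mul_sum]
        exact Finset.sum_congr rfl fun r _ => by ring } with hL
  have key : ∀ u : Lp (Fin n → ℝ) p (volume.restrict (Ioo (0:ℝ) T)),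
      proj T n p (N k) (a k) (b k) u =
        L (proj T n p (N (k+1)) (a (k+1)) (b (k+1)) u) := by
    intro u
    funext q
    obtain ⟨j, i⟩ := q
    have hint : Integrable (fun t => (u : ℝ → Fin n → ℝ) t j)
        (volume.restrict (Ioo (0:ℝ) T)) := by
      have h1 : Integrable (u : ℝ → Fin n → ℝ) (volume.restrict (Ioo (0:ℝ) T)) :=
        (Lp.memLp u).integrable Fact.out
      exact (ContinuousLinearMap.proj j : (Fin n → ℝ) →L[ℝ] ℝ).integrable_comp h1
    have hcov : Ioo (a k i) (b k i) ⊆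
        ⋃ r : Fin (N (k+1)), Icc (a (k+1) r) (b (k+1) r) := by
      intro t ht
      rw [hcover (k+1)]
      have := hsub k i ht
      exact ⟨this.1.le, this.2.le⟩
    have hsplit := integral_split (hdisj k) (hdisj (k+1)) f hf i hcov
      (fun t => (u : ℝ → Fin n → ℝ) t j) hint
    show (b k i - a k i)⁻¹ * _ = _
    rw [hsplit]
    simp only [hL, LinearMap.coe_mk, AddHom.coe_mk, proj]
    rw [Finset.mul_sum]
    refine Finset.sum_congr rfl fun r _ => ?_
    have h1 : b (k+1) r - a (k+1) r ≠ 0 := sub_ne_zero.2 (hab (k+1) r).ne'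
    have h2 : b k i - a k i ≠ 0 := sub_ne_zero.2 (hab k i).ne'
    field_simp
  have hmem : L (proj T n p (N (k+1)) (a (k+1)) (b (k+1)) v) ∈
      convexHull ℝ (L '' (proj T n p (N (k+1)) (a (k+1)) (b (k+1)) '' D)) := by
    have hsub' : convexHull ℝ (proj T n p (N (k+1)) (a (k+1)) (b (k+1)) '' D) ⊆
        L ⁻¹' (convexHull ℝ (L '' (proj T n p (N (k+1)) (a (k+1)) (b (k+1)) '' D))) :=
      convexHull_min (fun y hy => subset_convexHull ℝ _ ⟨y, hy, rfl⟩)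
        ((convex_convexHull ℝ _).linear_preimage L)
    exact hsub' hv
  have himg : L '' (proj T n p (N (k+1)) (a (k+1)) (b (k+1)) '' D) =
      proj T n p (N k) (a k) (b k) '' D := by
    rw [← Set.image_comp]
    exact Set.image_congr fun u _ => (key u).symm
  rw [Set.mem_setOf_eq, key v, ← himg]
  exact hmem
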